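/- Let φ: ℝⁿ → [0,∞) be an anisotropy of class C¹ on ℝⁿ \ {0} which vanishes only at the origin and is strictly convex in the sense of Reshetnyak. Then for every r > 0, the restriction of the gradient map Dφ to the level set {p ∈ ℝⁿ : φ(p) = r} is injective. -/

import Mathlib

open Set RealInnerProductSpace
noncomputable section

abbrev Eu (n : ℕ) := EuclideanSpace ℝ (Fin n)

/-- An anisotropy: a convex, nonnegative, positively 1-homogeneous function on ℝⁿ. -/
def IsAnisotropy {n : ℕ} (φ : Eu n → ℝ) : Prop :=
  ConvexOn ℝ Set.univ φ ∧ (∀ p, 0 ≤ φ p) ∧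
    ∀ t : ℝ, 0 ≤ t → ∀ p, φ (t • p) = t * φ p

lemma aux_fderiv {n : ℕ} {φ : Eu n → ℝ} (hC1 : ContDiffOn ℝ 1 φ {(0 : Eu n)}ᶜ)
    {x : Eu n} (hx : x ≠ 0) (v : Eu n) :
    HasDerivAt (fun t : ℝ => φ (x + t • v)) ⟪gradient φ x, v⟫ 0 := by
  have hd : DifferentiableAt ℝ φ x :=
    ((hC1.contDiffAt (isOpen_compl_singleton.mem_nhds hx)).differentiableAt one_ne_zero)
  have hline : HasDerivAt (fun t : ℝ => x + t • v) v 0 := by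
    simpa using ((hasDerivAt_id (0:ℝ)).smul_const v).const_add x
  have hF : HasFDerivAt φ (InnerProductSpace.toDual ℝ (Eu n) (gradient φ x))
      ((fun t : ℝ => x + t • v) 0) := by
    simpa using hasGradientAt_iff_hasFDerivAt.mp hd.hasGradientAt
  have := hF.comp_hasDerivAt (0:ℝ) hline
  rw [InnerProductSpace.toDual_apply_apply] at this
  exact this

/-- Euler relation: ⟪∇φ x, x⟫ = φ x for 1-homogeneous φ, x ≠ 0. -/
lemma aux_euler {n : ℕ} {φ : Eu n → ℝ} (hφ : IsAnisotropy φ)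
    (hC1 : ContDiffOn ℝ 1 φ {(0 : Eu n)}ᶜ) {x : Eu n} (hx : x ≠ 0) :
    ⟪gradient φ x, x⟫ = φ x := by
  have h1 : HasDerivAt (fun t : ℝ => φ (x + t • x)) ⟪gradient φ x, x⟫ 0 :=
    aux_fderiv hC1 hx x
  have h2 : HasDerivAt (fun t : ℝ => φ (x + t • x)) (φ x) 0 := by
    have heq : (fun t : ℝ => φ (x + t • x)) =ᶠ[nhds (0:ℝ)] fun t => (1 + t) * φ x := by
      filter_upwards [eventually_gt_nhds (show (-1:ℝ) < 0 by norm_num)] with t ht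
      have : x + t • x = (1 + t) • x := by module
      rw [this, hφ.2.2 (1+t) (by linarith) x]
    have : HasDerivAt (fun t : ℝ => (1 + t) * φ x) (φ x) 0 := by
      simpa using (((hasDerivAt_id (0:ℝ)).const_add 1).mul_const (φ x))
    exact this.congr_of_eventuallyEq heq
  exact h1.unique h2

/-- Subgradient inequality. -/
lemma aux_subgrad {n : ℕ} {φ : Eu n → ℝ} (hφ : IsAnisotropy φ)
    (hC1 : ContDiffOn ℝ 1 φ {(0 : Eu n)}ᶜ) {x : Eu n} (hx : x ≠ 0) (y : Eu n) :
    φ x + ⟪gradient φ x, y - x⟫ ≤ φ y := by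
  have hg : ConvexOn ℝ (univ : Set ℝ) (fun t : ℝ => φ (x + t • (y - x))) := by
    have h := hφ.1.comp_affineMap (AffineMap.lineMap x y)
    have hfun : (fun t : ℝ => φ (x + t • (y - x))) = φ ∘ (AffineMap.lineMap x y) := by
      funext t
      simp only [Function.comp_apply]
      congr 1
      simp [AffineMap.lineMap_apply]
      module
    rw [hfun]
    simpa using h
  have hder : HasDerivAt (fun t : ℝ => φ (x + t • (y - x))) ⟪gradient φ x, y - x⟫ 0 :=
    aux_fderiv hC1 hx (y - x)
  have := hg.le_slope_of_hasDerivAt (x := (0:ℝ)) (y := (1:ℝ)) (mem_univ _) (mem_univ _)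
    one_pos hder
  simp only [slope_def_field, div_one] at this
  have h0 : x + (0:ℝ) • (y - x) = x := by simp
  have h1 : x + (1:ℝ) • (y - x) = y := by module
  rw [h0, h1] at this
  linarith [this]

/-- **Lemma 2.15.** Let `φ : ℝⁿ → [0,∞)` be an anisotropy of class `C¹` on
`ℝⁿ \ {0}`, vanishing only at the origin and strictly convex in the sense of
Reshetnyak. Then for every `r > 0` the gradient map `Dφ` restricted to the level
set `{p : φ(p) = r}` is injective. -/
theorem stmt13 {n : ℕ} (φ : Eu n → ℝ) (hφ : IsAnisotropy φ)
    (hC1 : ContDiffOn ℝ 1 φ {(0 : Eu n)}ᶜ)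
    (hvan : ∀ p, φ p = 0 → p = 0)
    (hres : ∀ p q : Eu n, φ (p + q) = φ p + φ q →
      p = 0 ∨ ∃ t : ℝ, 0 ≤ t ∧ q = t • p) :
    ∀ r : ℝ, 0 < r → Set.InjOn (gradient φ) {p : Eu n | φ p = r} := by
  intro r hr p hp q hq hgrad
  simp only [mem_setOf_eq] at hp hq
  have hp0 : p ≠ 0 := by
    rintro rfl
    have : φ (0 : Eu n) = 0 := by simpa using hφ.2.2 0 le_rfl 0
    rw [hp] at this; linarith
  have hq0 : q ≠ 0 := by
    rintro rfl
    have : φ (0 : Eu n) = 0 := by simpa using hφ.2.2 0 le_rfl 0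
    rw [hq] at this; linarith
  -- upper bound: subadditivity
  have hupper : φ (p + q) ≤ 2 * r := by
    have hc := hφ.1.2 (mem_univ p) (mem_univ q)
      (by norm_num : (0:ℝ) ≤ (1/2:ℝ)) (by norm_num : (0:ℝ) ≤ (1/2:ℝ)) (by norm_num)
    simp only [smul_eq_mul] at hc
    have hh : φ (p + q) = 2 * φ ((1/2 : ℝ) • p + (1/2 : ℝ) • q) := by
      have : ((2:ℝ)) • ((1/2 : ℝ) • p + (1/2 : ℝ) • q) = p + q := by module
      rw [← this, hφ.2.2 2 (by norm_num)]
    rw [hp, hq] at hc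
    linarith [hc, hh.le, hh.ge]
  -- lower bound: subgradient inequality
  have hlower : 2 * r ≤ φ (p + q) := by
    have hsg := aux_subgrad hφ hC1 hp0 (p + q)
    have : (p + q) - p = q := by abel
    rw [this] at hsg
    have heq : ⟪gradient φ p, q⟫ = r := by
      rw [hgrad, aux_euler hφ hC1 hq0, hq]
    rw [hp, heq] at hsg
    linarith
  have hsum : φ (p + q) = φ p + φ q := by rw [hp, hq]; linarith
  rcases hres p q hsum with h | ⟨t, ht, hqt⟩
  · exact absurd h hp0
  · have hrt : r = t * r := by
      have h3 : φ q = t * φ p := by rw [hqt, hφ.2.2 t ht]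
      rw [hp, hq] at h3; exact h3
    have h2 : (t - 1) * r = 0 := by linear_combination -hrt
    rcases mul_eq_zero.mp h2 with h | h
    · have ht1 : t = 1 := by linarith
      rw [hqt, ht1, one_smul]
    · linarith

end
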